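/- (Theorem 1(iii)) Let L be an N×N real symmetric positive semidefinite matrix whose kernel is spanned by the all-ones vector 1⃗, with eigenvalues 0 = λ₁ < λ₂ ≤ … ≤ λ_N. Suppose the gain sequence satisfies ε(k) > 0 for all k and lim_{k→∞} ε(k) = 0, and suppose the system cannot reach average consensus in finite time, i.e., for every T there exists i ∈ {2, …, N} with ∏_{k=0}^{T−1}(1 − ε(k)λᵢ) ≠ 0. Then average consensus is reached asymptotically (∏_{k=0}^{T−1}(I − ε(k)L) → (1/N)·1⃗1⃗ᵀ as T → ∞) if and only if Σ_{k=0}^{∞} ε(k) = ∞. -/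

import Mathlib

open Matrix Finset Filter

/-- The product `∏_{k=0}^{T-1} (I - ε(k) L)`, built recursively as
`P 0 = I`, `P (T+1) = (I - ε(T) L) * P T`. -/
noncomputable def consProd {N : ℕ} (L : Matrix (Fin N) (Fin N) ℝ) (ε : ℕ → ℝ) :
    ℕ → Matrix (Fin N) (Fin N) ℝ
  | 0 => 1
  | T + 1 => (1 - ε T • L) * consProd L ε T

section Aux

lemma aux_one_sub_le_exp_neg (x : ℝ) : 1 - x ≤ Real.exp (-x) := by
  have := Real.add_one_le_exp (-x); linarith

lemma aux_exp_bound_below (x : ℝ) (h0 : 0 ≤ x) (h1 : x ≤ 1/2) : Real.exp (-(2*x)) ≤ 1 - x := by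
  have h2 : (2*x) + 1 ≤ Real.exp (2*x) := Real.add_one_le_exp _
  have h3 : (1:ℝ) ≤ (1-x) * Real.exp (2*x) := by nlinarith
  rw [Real.exp_neg, inv_le_iff_one_le_mul₀ (Real.exp_pos _)]
  linarith

lemma aux_prod_tendsto_zero (lam : ℝ) (hlam : 0 < lam) (ε : ℕ → ℝ)
    (hεlim : Filter.Tendsto ε atTop (nhds 0))
    (hsum : Tendsto (fun n => ∑ k ∈ Finset.range n, ε k) atTop atTop) :
    Tendsto (fun T => ∏ k ∈ Finset.range T, (1 - ε k * lam)) atTop (nhds 0) := by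
  obtain ⟨K, hK⟩ : ∃ K, ∀ k ≥ K, ε k * lam < 1 := by
    have h : Tendsto (fun k => ε k * lam) atTop (nhds 0) := by
      simpa using hεlim.mul_const lam
    exact eventually_atTop.mp (h.eventually (eventually_lt_nhds one_pos))
  set C : ℝ := |∏ k ∈ Finset.range K, (1 - ε k * lam)| *
    Real.exp (lam * ∑ k ∈ Finset.range K, ε k) with hC
  have hg : Tendsto (fun T => C * Real.exp (-(lam * ∑ k ∈ Finset.range T, ε k))) atTop
      (nhds 0) := by
    have h1 : Tendsto (fun T => lam * ∑ k ∈ Finset.range T, ε k) atTop atTop :=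
      hsum.const_mul_atTop hlam
    have h2 : Tendsto (fun T => -(lam * ∑ k ∈ Finset.range T, ε k)) atTop atBot :=
      tendsto_neg_atTop_atBot.comp h1
    have h3 := Real.tendsto_exp_atBot.comp h2
    simpa using h3.const_mul C
  apply squeeze_zero_norm' _ hg
  filter_upwards [eventually_ge_atTop K] with T hT
  have hsplit := Finset.prod_range_mul_prod_Ico (fun k => (1 - ε k * lam)) hT
  have hpos : ∀ k ∈ Finset.Ico K T, (0:ℝ) ≤ 1 - ε k * lam := by
    intro k hk
    have := hK k (Finset.mem_Ico.mp hk).1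
    linarith
  have hIco_le : ∏ k ∈ Finset.Ico K T, (1 - ε k * lam) ≤
      Real.exp (-(lam * (∑ k ∈ Finset.range T, ε k - ∑ k ∈ Finset.range K, ε k))) := by
    calc ∏ k ∈ Finset.Ico K T, (1 - ε k * lam)
        ≤ ∏ k ∈ Finset.Ico K T, Real.exp (-(ε k * lam)) := by
          apply Finset.prod_le_prod hpos
          intro k hk; exact aux_one_sub_le_exp_neg _
      _ = Real.exp (∑ k ∈ Finset.Ico K T, -(ε k * lam)) := (Real.exp_sum _ _).symm
      _ = Real.exp (-(lam * (∑ k ∈ Finset.range T, ε k - ∑ k ∈ Finset.range K, ε k))) := by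
          rw [← Finset.sum_Ico_eq_sub _ hT]
          congr 1
          rw [Finset.mul_sum, ← Finset.sum_neg_distrib]
          exact Finset.sum_congr rfl (fun k _ => by ring)
  have habs : |∏ k ∈ Finset.range T, (1 - ε k * lam)| ≤
      C * Real.exp (-(lam * ∑ k ∈ Finset.range T, ε k)) := by
    rw [← hsplit, abs_mul]
    have h1 : |∏ k ∈ Finset.Ico K T, (1 - ε k * lam)| =
        ∏ k ∈ Finset.Ico K T, (1 - ε k * lam) :=
      abs_of_nonneg (Finset.prod_nonneg hpos)
    rw [h1, hC]
    have hh : Real.exp (lam * ∑ k ∈ Finset.range K, ε k) *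
        Real.exp (-(lam * ∑ k ∈ Finset.range T, ε k))
        = Real.exp (-(lam * (∑ k ∈ Finset.range T, ε k - ∑ k ∈ Finset.range K, ε k))) := by
      rw [← Real.exp_add]; congr 1; ring
    rw [mul_assoc, hh]
    exact mul_le_mul_of_nonneg_left hIco_le (abs_nonneg _)
  simpa only [Real.norm_eq_abs] using habs

lemma aux_prod_not_tendsto_zero (lam : ℝ) (hlam : 0 < lam) (ε : ℕ → ℝ) (hεpos : ∀ k, 0 < ε k)
    (hεlim : Tendsto ε atTop (nhds 0)) (hsummable : Summable ε)
    (hne : ∀ T, ∏ k ∈ Finset.range T, (1 - ε k * lam) ≠ 0) :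
    ¬ Tendsto (fun T => ∏ k ∈ Finset.range T, (1 - ε k * lam)) atTop (nhds 0) := by
  obtain ⟨K, hK⟩ : ∃ K, ∀ k ≥ K, ε k * lam ≤ 1/2 := by
    have h : Tendsto (fun k => ε k * lam) atTop (nhds 0) := by
      simpa using hεlim.mul_const lam
    exact eventually_atTop.mp (h.eventually (eventually_le_nhds (by norm_num : (0:ℝ) < 1/2)))
  set p := ∏ k ∈ Finset.range K, (1 - ε k * lam) with hp
  have hpne : p ≠ 0 := hne K
  set c : ℝ := |p| * Real.exp (-(2 * lam * ∑' k, ε k)) with hc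
  have hcpos : 0 < c := mul_pos (abs_pos.mpr hpne) (Real.exp_pos _)
  intro h
  have hev : ∀ᶠ T in atTop, |∏ k ∈ Finset.range T, (1 - ε k * lam)| < c := by
    have := h.eventually (eventually_abs_sub_lt 0 hcpos)
    simpa using this
  obtain ⟨T, hTlt, hTK⟩ := (hev.and (eventually_ge_atTop K)).exists
  have hfac : ∀ k ∈ Finset.Ico K T, (0:ℝ) ≤ 1 - ε k * lam ∧
      Real.exp (-(2 * (ε k * lam))) ≤ 1 - ε k * lam := by
    intro k hk
    have h1 := hK k (Finset.mem_Ico.mp hk).1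
    have h2 : 0 ≤ ε k * lam := le_of_lt (mul_pos (hεpos k) hlam)
    exact ⟨by linarith, aux_exp_bound_below _ h2 h1⟩
  have hIco_ge : Real.exp (-(2 * lam * ∑ k ∈ Finset.Ico K T, ε k)) ≤
      ∏ k ∈ Finset.Ico K T, (1 - ε k * lam) := by
    calc Real.exp (-(2 * lam * ∑ k ∈ Finset.Ico K T, ε k))
        = ∏ k ∈ Finset.Ico K T, Real.exp (-(2 * (ε k * lam))) := by
          rw [← Real.exp_sum]; congr 1
          rw [Finset.mul_sum, ← Finset.sum_neg_distrib]
          exact Finset.sum_congr rfl (fun k _ => by ring)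
      _ ≤ ∏ k ∈ Finset.Ico K T, (1 - ε k * lam) := by
          apply Finset.prod_le_prod (fun k _ => (Real.exp_pos _).le)
          intro k hk; exact (hfac k hk).2
  have hsum_le : ∑ k ∈ Finset.Ico K T, ε k ≤ ∑' k, ε k :=
    Summable.sum_le_tsum _ (fun k _ => (hεpos k).le) hsummable
  have hexp_le : Real.exp (-(2 * lam * ∑' k, ε k)) ≤
      Real.exp (-(2 * lam * ∑ k ∈ Finset.Ico K T, ε k)) := by
    apply Real.exp_le_exp.mpr
    nlinarith
  have hlow : c ≤ |∏ k ∈ Finset.range T, (1 - ε k * lam)| := by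
    rw [← Finset.prod_range_mul_prod_Ico (fun k => (1 - ε k * lam)) hTK, abs_mul]
    have h1 : |∏ k ∈ Finset.Ico K T, (1 - ε k * lam)| =
        ∏ k ∈ Finset.Ico K T, (1 - ε k * lam) :=
      abs_of_nonneg (Finset.prod_nonneg (fun k hk => (hfac k hk).1))
    rw [h1, hc]
    exact mul_le_mul_of_nonneg_left (le_trans hexp_le hIco_ge) (abs_nonneg _)
  linarith

lemma aux_mulVec_vecMulVec {N : ℕ} (a b x : Fin N → ℝ) :
    (vecMulVec a b).mulVec x = (b ⬝ᵥ x) • a := by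
  ext i
  simp [vecMulVec_apply, mulVec, dotProduct, Finset.mul_sum, mul_comm, mul_assoc, mul_left_comm]

lemma aux_mul_vecMulVec {N : ℕ} (L : Matrix (Fin N) (Fin N) ℝ) (a b : Fin N → ℝ) :
    L * vecMulVec a b = vecMulVec (L.mulVec a) b := by
  ext i j
  simp [mul_apply, vecMulVec_apply, mulVec, dotProduct, Finset.sum_mul, mul_assoc]

lemma aux_smul_vecMulVec {N : ℕ} (c : ℝ) (a b : Fin N → ℝ) :
    vecMulVec (c • a) b = c • vecMulVec a b := by
  ext i j; simp [vecMulVec_apply, mul_assoc]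

lemma aux_sum_vecMulVec_eq_one {N : ℕ} (v : Fin N → Fin N → ℝ)
    (horth : ∀ i j, v i ⬝ᵥ v j = if i = j then 1 else 0) :
    ∑ i, vecMulVec (v i) (v i) = (1 : Matrix (Fin N) (Fin N) ℝ) := by
  have hV : (Matrix.of v) * (Matrix.of v)ᵀ = 1 := by
    ext i j
    simpa [mul_apply, dotProduct, one_apply] using horth i j
  have hV2 : (Matrix.of v)ᵀ * (Matrix.of v) = 1 := mul_eq_one_comm.mp hV
  ext a b
  have h := congrArg (fun M : Matrix (Fin N) (Fin N) ℝ => M a b) hV2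
  simp only [mul_apply, transpose_apply, Matrix.of_apply, one_apply] at h
  simp only [Matrix.sum_apply, vecMulVec_apply]
  simpa [one_apply] using h

lemma aux_sum_mulVec {N : ℕ} {ι : Type*} (s : Finset ι) (A : ι → Matrix (Fin N) (Fin N) ℝ)
    (x : Fin N → ℝ) :
    (∑ j ∈ s, A j).mulVec x = ∑ j ∈ s, (A j).mulVec x := by
  ext i
  simp only [mulVec, dotProduct, Matrix.sum_apply, Finset.sum_apply, Finset.sum_mul]
  rw [Finset.sum_comm]

lemma aux_dotProduct_sum {N : ℕ} {ι : Type*} (s : Finset ι) (x : Fin N → ℝ)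
    (y : ι → Fin N → ℝ) :
    x ⬝ᵥ (∑ j ∈ s, y j) = ∑ j ∈ s, x ⬝ᵥ y j := by
  simp only [dotProduct, Finset.sum_apply, Finset.mul_sum]
  rw [Finset.sum_comm]

lemma aux_consProd_repr {N : ℕ} (L : Matrix (Fin N) (Fin N) ℝ) (lam : Fin N → ℝ)
    (v : Fin N → Fin N → ℝ)
    (heig : ∀ i, L.mulVec (v i) = lam i • v i)
    (horth : ∀ i j, v i ⬝ᵥ v j = if i = j then 1 else 0)
    (ε : ℕ → ℝ) (T : ℕ) :
    consProd L ε T =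
      ∑ i, (∏ k ∈ Finset.range T, (1 - ε k * lam i)) • vecMulVec (v i) (v i) := by
  induction T with
  | zero =>
    simp only [consProd, Finset.range_zero, Finset.prod_empty, one_smul]
    exact (aux_sum_vecMulVec_eq_one v horth).symm
  | succ T ih =>
    show (1 - ε T • L) * consProd L ε T = _
    rw [ih, Finset.mul_sum]
    apply Finset.sum_congr rfl
    intro i _
    have hL : L * vecMulVec (v i) (v i) = lam i • vecMulVec (v i) (v i) := by
      rw [aux_mul_vecMulVec, heig, aux_smul_vecMulVec]
    rw [Matrix.mul_smul, sub_mul, one_mul, Matrix.smul_mul, hL, Finset.prod_range_succ,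
      smul_sub, smul_smul, smul_smul, mul_one_sub, sub_smul]
    congr 2
    ring

end Aux

theorem stmt_3 (N : ℕ) (hN : 2 ≤ N)
    (L : Matrix (Fin N) (Fin N) ℝ) (hsymm : L.IsSymm) (hpsd : L.PosSemidef)
    (lam : Fin N → ℝ) (v : Fin N → Fin N → ℝ)
    (hlam_mono : Monotone lam)
    (hlam0 : ∀ i : Fin N, (i : ℕ) = 0 → lam i = 0)
    (hlam_pos : ∀ i : Fin N, (i : ℕ) ≠ 0 → 0 < lam i)
    (heig : ∀ i, L.mulVec (v i) = lam i • v i)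
    (horth : ∀ i j, v i ⬝ᵥ v j = if i = j then 1 else 0)
    (hv0 : ∀ i : Fin N, (i : ℕ) = 0 → v i = fun _ => (Real.sqrt N)⁻¹)
    (ε : ℕ → ℝ) (hεpos : ∀ k, 0 < ε k) (hεlim : Tendsto ε atTop (nhds 0))
    (hnofin : ∀ T : ℕ, ∃ i : Fin N, (i : ℕ) ≠ 0 ∧
      ∏ k ∈ Finset.range T, (1 - ε k * lam i) ≠ 0) :
    Tendsto (consProd L ε) atTop
        (nhds ((N : ℝ)⁻¹ • vecMulVec (fun _ => 1) (fun _ => 1))) ↔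
      Tendsto (fun n => ∑ k ∈ Finset.range n, ε k) atTop atTop := by
  haveI : NeZero N := ⟨by omega⟩
  classical
  set c : Fin N → ℕ → ℝ := fun i T => ∏ k ∈ Finset.range T, (1 - ε k * lam i) with hcdef
  have hrepr : ∀ T, consProd L ε T = ∑ i, c i T • vecMulVec (v i) (v i) :=
    fun T => aux_consProd_repr L lam v heig horth ε T
  have hv00 : v 0 = fun _ => (Real.sqrt N)⁻¹ := hv0 0 (by simp)
  have htarget : ((N : ℝ)⁻¹ • vecMulVec (fun _ => (1:ℝ)) (fun _ => (1:ℝ)) :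
      Matrix (Fin N) (Fin N) ℝ) = vecMulVec (v 0) (v 0) := by
    ext i j
    simp only [Matrix.smul_apply, vecMulVec_apply, hv00, smul_eq_mul, mul_one]
    rw [← mul_inv, Real.mul_self_sqrt (by positivity)]
  have hphi_sum : ∀ (i : Fin N) (w : Fin N → ℝ),
      v i ⬝ᵥ (∑ j, w j • vecMulVec (v j) (v j)).mulVec (v i) = w i := by
    intro i w
    rw [aux_sum_mulVec]
    have hterm : ∀ j, (w j • vecMulVec (v j) (v j)).mulVec (v i)
        = (w j * (v j ⬝ᵥ v i)) • v j := by
      intro j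
      rw [Matrix.smul_mulVec, aux_mulVec_vecMulVec, smul_smul]
    simp only [hterm]
    rw [aux_dotProduct_sum]
    have hterm2 : ∀ j, v i ⬝ᵥ (w j * (v j ⬝ᵥ v i)) • v j = if j = i then w j else 0 := by
      intro j
      rw [dotProduct_smul, smul_eq_mul, horth j i, horth i j]
      by_cases h : j = i
      · subst h; simp
      · simp [h, show ¬ i = j from fun hh => h hh.symm]
    simp only [hterm2]
    simp [Finset.sum_ite_eq']
  have hcont : ∀ i : Fin N, Continuous fun M : Matrix (Fin N) (Fin N) ℝ =>
      v i ⬝ᵥ M.mulVec (v i) := by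
    intro i
    simp only [dotProduct, mulVec]
    apply continuous_finset_sum
    intro a _
    apply Continuous.mul continuous_const
    apply continuous_finset_sum
    intro b _
    exact (Continuous.matrix_elem continuous_id a b).mul continuous_const
  constructor
  · -- convergence → divergent sums
    intro hmat
    by_contra hndiv
    have hsummable : Summable ε := by
      by_contra hns
      exact hndiv ((not_summable_iff_tendsto_nat_atTop_of_nonneg
        (fun n => (hεpos n).le)).mp hns)
    obtain ⟨i, hi0, hiT⟩ : ∃ i : Fin N, (i : ℕ) ≠ 0 ∧ ∀ T, c i T ≠ 0 := by
      by_contra hcon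
      push_neg at hcon
      choose! g hg using hcon
      set M := Finset.univ.sup g with hM
      obtain ⟨i, hi0, hiM⟩ := hnofin M
      apply hiM
      have hzero : c i (g i) = 0 := hg i hi0
      have hle : g i ≤ M := Finset.le_sup (Finset.mem_univ i)
      have hsplit := Finset.prod_range_mul_prod_Ico (fun k => 1 - ε k * lam i) hle
      have : c i M = 0 := by
        rw [hcdef]
        simp only [← hsplit]
        rw [show (∏ k ∈ Finset.range (g i), (1 - ε k * lam i)) = c i (g i) from rfl, hzero,
          zero_mul]
      exact this
    -- extract scalar convergence
    have hczero : Tendsto (fun T => c i T) atTop (nhds 0) := by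
      have h1 := ((hcont i).tendsto _).comp hmat
      have h2 : (fun T => v i ⬝ᵥ (consProd L ε T).mulVec (v i)) = fun T => c i T := by
        funext T
        rw [hrepr T, hphi_sum]
      have h3 : v i ⬝ᵥ (((N : ℝ)⁻¹ • vecMulVec (fun _ => (1:ℝ)) (fun _ => (1:ℝ)) :
          Matrix (Fin N) (Fin N) ℝ)).mulVec (v i) = 0 := by
        rw [htarget, aux_mulVec_vecMulVec, dotProduct_smul, horth]
        have : ¬ (i = 0) := fun h => hi0 (by simp [h])
        simp [this, eq_comm]
      rw [Function.comp_def] at h1  -- hopefully defeq handled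
      rw [h2, h3] at h1
      exact h1
    exact aux_prod_not_tendsto_zero (lam i) (hlam_pos i hi0) ε hεpos hεlim hsummable hiT hczero
  · -- divergent sums → convergence
    intro hsum
    have hlim : ∀ i : Fin N, Tendsto (fun T => c i T) atTop
        (nhds (if (i : ℕ) = 0 then 1 else 0)) := by
      intro i
      by_cases h0 : (i : ℕ) = 0
      · simp only [h0, if_pos]
        have : ∀ T, c i T = 1 := by
          intro T; rw [hcdef]; simp [hlam0 i h0]
        simp only [this]
        exact tendsto_const_nhds
      · simp only [h0, if_neg, if_false]
        exact aux_prod_tendsto_zero (lam i) (hlam_pos i h0) ε hεlim hsum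
    have hmat : Tendsto (fun T => ∑ i, c i T • vecMulVec (v i) (v i)) atTop
        (nhds (∑ i : Fin N, (if (i : ℕ) = 0 then (1:ℝ) else 0) • vecMulVec (v i) (v i))) :=
      tendsto_finset_sum _ (fun i _ => (hlim i).smul_const _)
    have hsum_eq : ∑ i : Fin N, (if (i : ℕ) = 0 then (1:ℝ) else 0) • vecMulVec (v i) (v i)
        = vecMulVec (v 0) (v 0) := by
      have : ∀ i : Fin N, ((i : ℕ) = 0) = (i = 0) := by
        intro i
        exact propext Fin.val_eq_zero_iff
      simp only [this, ite_smul, one_smul, zero_smul]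
      rw [Finset.sum_ite_eq' Finset.univ (0 : Fin N) (fun i => vecMulVec (v i) (v i))]
      simp
    rw [hsum_eq] at hmat
    have hfun : consProd L ε = fun T => ∑ i, c i T • vecMulVec (v i) (v i) := funext hrepr
    rw [hfun, htarget]
    exact hmat
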